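/- For p > 1, m, t ∈ ℝ and v ≥ 0, the supremum of E[(X − t)_+] over all integrable random variables X on an atomless probability space with E[X] = m and E[|X − m|^p] ≤ v^p equals max over α ∈ [0,1] of { (1 − α)(m − t) + v·((1 − α)^{1−p} + α^{1−p})^{−1/p} }, with the conventions 1/0 = ∞ and 1/∞ = 0. -/

import Mathlib

open MeasureTheory Set ENNReal
open scoped Classical

/-- An atomless measure: every set of nonzero measure can be split nontrivially. -/
def Atomless {Ω : Type*} [MeasurableSpace Ω] (μ : Measure Ω) : Prop :=
  ∀ A : Set Ω, MeasurableSet A → μ A ≠ 0 →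
    ∃ B ⊆ A, MeasurableSet B ∧ μ B ≠ 0 ∧ μ B ≠ μ A

/-- The set of mean excess values `E[(X - t)_+]` achieved by integrable random variables `X`
with mean `m` and `p`-th centralized absolute moment at most `v^p` (the moment uncertainty
set `L^p(m, v)`). -/
def meanExcessMomentSet {Ω : Type*} [MeasurableSpace Ω] (μ : Measure Ω)
    (p m v t : ℝ) : Set ℝ :=
  {y : ℝ | ∃ X : Ω → ℝ, Measurable X ∧ Integrable X μ ∧ (∫ ω, X ω ∂μ) = m ∧
    Integrable (fun ω => |X ω - m| ^ p) μ ∧ (∫ ω, |X ω - m| ^ p ∂μ) ≤ v ^ p ∧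
    y = ∫ ω, max (X ω - t) 0 ∂μ}


section WCMEAux

variable {Ω : Type*} [MeasurableSpace Ω]

lemma wcme_halve (μ : Measure Ω) (hμ : Atomless μ) {A : Set Ω} (hA : MeasurableSet A)
    (h0 : μ A ≠ 0) (hfin : μ A ≠ ⊤) :
    ∃ B, B ⊆ A ∧ MeasurableSet B ∧ μ B ≠ 0 ∧ μ B ≤ μ A / 2 := by
  obtain ⟨B, hBA, hBm, hB0, hBne⟩ := hμ A hA h0
  have hBle : μ B ≤ μ A := measure_mono hBA
  have hBfin : μ B ≠ ⊤ := (hBle.trans_lt (lt_top_iff_ne_top.mpr hfin)).ne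
  by_cases h : μ B ≤ μ A / 2
  · exact ⟨B, hBA, hBm, hB0, h⟩
  · push_neg at h
    have hd : μ (A \ B) = μ A - μ B := measure_diff hBA hBm.nullMeasurableSet hBfin
    refine ⟨A \ B, diff_subset, hA.diff hBm, ?_, ?_⟩
    · rw [hd]
      simp only [ne_eq, tsub_eq_zero_iff_le, not_le]
      exact lt_of_le_of_ne hBle hBne
    · rw [hd]
      rw [tsub_le_iff_left]
      calc μ A = μ A / 2 + μ A / 2 := (ENNReal.add_halves _).symm
        _ ≤ μ B + μ A / 2 := add_le_add_left h.le _

lemma wcme_small (μ : Measure Ω) [IsFiniteMeasure μ] (hμ : Atomless μ) {A : Set Ω}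
    (hA : MeasurableSet A) (h0 : μ A ≠ 0) {ε : ℝ≥0∞} (hε : ε ≠ 0) :
    ∃ B, B ⊆ A ∧ MeasurableSet B ∧ μ B ≠ 0 ∧ μ B ≤ ε := by
  have key : ∀ n : ℕ, ∃ B, B ⊆ A ∧ MeasurableSet B ∧ μ B ≠ 0 ∧ μ B ≤ μ A / 2 ^ n := by
    intro n; induction n with
    | zero => exact ⟨A, subset_rfl, hA, h0, by simp⟩
    | succ n ih =>
      obtain ⟨B, hBA, hBm, hB0, hBle⟩ := ih
      obtain ⟨C, hCB, hCm, hC0, hCle⟩ := wcme_halve μ hμ hBm hB0 (measure_ne_top μ B)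
      refine ⟨C, hCB.trans hBA, hCm, hC0, ?_⟩
      calc μ C ≤ μ B / 2 := hCle
        _ ≤ μ A / 2 ^ n / 2 := by gcongr
        _ = μ A / 2 ^ (n + 1) := by
          rw [pow_succ, div_eq_mul_inv, div_eq_mul_inv, div_eq_mul_inv, mul_assoc,
            ← ENNReal.mul_inv (Or.inr (by norm_num)) (Or.inl (by simp))]
  obtain ⟨n, hn⟩ : ∃ n : ℕ, μ A / 2 ^ n ≤ ε := by
    by_cases htop : ε = ⊤
    · exact ⟨0, by simp [htop]⟩
    · have hdiv : μ A / ε ≠ ⊤ := (ENNReal.div_lt_top (measure_ne_top μ A) hε).ne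
      obtain ⟨n, hn⟩ := ENNReal.exists_nat_gt hdiv
      refine ⟨n, ?_⟩
      have h2 : μ A ≤ ε * 2 ^ n := by
        have hle : μ A / ε ≤ (2 : ℝ≥0∞) ^ n := by
          refine hn.le.trans ?_
          have : (n : ℝ≥0∞) ≤ ((2 ^ n : ℕ) : ℝ≥0∞) := by
            exact_mod_cast Nat.lt_two_pow_self.le
          simpa using this
        calc μ A = ε * (μ A / ε) := (ENNReal.mul_div_cancel hε htop).symm
          _ ≤ ε * 2 ^ n := by gcongr
      rw [ENNReal.div_le_iff_le_mul (Or.inl (by positivity)) (Or.inl (by simp))]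
      exact h2
  obtain ⟨B, h1, h2, h3, h4⟩ := key n
  exact ⟨B, h1, h2, h3, h4.trans hn⟩

lemma wcme_sier (μ : Measure Ω) [IsProbabilityMeasure μ] (hμ : Atomless μ) {r : ℝ≥0∞}
    (hr : r ≤ 1) : ∃ A, MeasurableSet A ∧ μ A = r := by
  classical
  have step : ∀ B : Set Ω, MeasurableSet B → μ B ≤ r →
      ∃ B', B ⊆ B' ∧ MeasurableSet B' ∧ μ B' ≤ r ∧
        ∀ C, MeasurableSet C → C ⊆ Bᶜ → μ B + μ C ≤ r → μ B + μ C / 2 ≤ μ B' := by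
    intro B hBm hBr
    set δ : ℝ≥0∞ := ⨆ C : {C : Set Ω // MeasurableSet C ∧ C ⊆ Bᶜ ∧ μ B + μ C ≤ r}, μ C.1 with hδdef
    by_cases hδ0 : δ = 0
    · refine ⟨B, subset_rfl, hBm, hBr, fun C hCm hCB hCr => ?_⟩
      have hCle : μ C ≤ δ := le_iSup (fun C : {C : Set Ω // MeasurableSet C ∧ C ⊆ Bᶜ ∧ μ B + μ C ≤ r} => μ C.1) ⟨C, hCm, hCB, hCr⟩
      have : μ C = 0 := le_antisymm (hδ0 ▸ hCle) (by positivity)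
      simp [this]
    · have hδ1 : δ ≤ 1 := by
        rw [hδdef]
        exact iSup_le fun C => prob_le_one
      have hhalf : δ / 2 < δ := ENNReal.half_lt_self hδ0 (hδ1.trans_lt one_lt_top).ne
      obtain ⟨C₀, hC₀gt⟩ := lt_iSup_iff.mp (hδdef ▸ hhalf)
      obtain ⟨C₀, hC₀m, hC₀B, hC₀r⟩ := C₀
      refine ⟨B ∪ C₀, subset_union_left, hBm.union hC₀m, ?_, ?_⟩
      · exact (measure_union_le _ _).trans hC₀r
      · intro C hCm hCB hCr
        have hdisj : Disjoint B C₀ := subset_compl_iff_disjoint_left.mp hC₀B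
        rw [measure_union hdisj hC₀m]
        have hCle : μ C ≤ δ := le_iSup (fun C : {C : Set Ω // MeasurableSet C ∧ C ⊆ Bᶜ ∧ μ B + μ C ≤ r} => μ C.1) ⟨C, hCm, hCB, hCr⟩
        have : μ C / 2 ≤ μ C₀ := by
          refine le_trans ?_ hC₀gt.le
          rw [← hδdef]
          gcongr
        exact add_le_add_right this _
  let T : ℕ → {B : Set Ω // MeasurableSet B ∧ μ B ≤ r} := fun n =>
    Nat.rec ⟨∅, MeasurableSet.empty, by simp⟩
      (fun _ q => ⟨(step q.1 q.2.1 q.2.2).choose,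
        ((step q.1 q.2.1 q.2.2).choose_spec.2.1),
        ((step q.1 q.2.1 q.2.2).choose_spec.2.2.1)⟩) n
  have hTsucc : ∀ n, (T (n+1) : {B : Set Ω // MeasurableSet B ∧ μ B ≤ r}) =
      ⟨(step (T n).1 (T n).2.1 (T n).2.2).choose,
        ((step (T n).1 (T n).2.1 (T n).2.2).choose_spec.2.1),
        ((step (T n).1 (T n).2.1 (T n).2.2).choose_spec.2.2.1)⟩ := fun n => rfl
  have hsub : ∀ n, (T n).1 ⊆ (T (n+1)).1 := by
    intro n; rw [hTsucc n]; exact (step (T n).1 (T n).2.1 (T n).2.2).choose_spec.1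
  have hspec : ∀ n C, MeasurableSet C → C ⊆ ((T n).1)ᶜ → μ (T n).1 + μ C ≤ r →
      μ (T n).1 + μ C / 2 ≤ μ (T (n+1)).1 := by
    intro n; rw [hTsucc n]; exact (step (T n).1 (T n).2.1 (T n).2.2).choose_spec.2.2.2
  set Binf := ⋃ n, (T n).1 with hBinfdef
  have hmono : Monotone fun n => (T n).1 := monotone_nat_of_le_succ hsub
  have hBm : MeasurableSet Binf := MeasurableSet.iUnion fun n => (T n).2.1
  have hle : μ Binf ≤ r := by
    rw [hBinfdef, (hmono.directed_le).measure_iUnion]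
    exact iSup_le fun n => (T n).2.2
  rcases eq_or_lt_of_le hle with heq | hlt
  · exact ⟨Binf, hBm, heq⟩
  · exfalso
    have hc0 : μ Binfᶜ ≠ 0 := by
      rw [measure_compl hBm (measure_ne_top μ _), measure_univ]
      intro h
      rw [tsub_eq_zero_iff_le] at h
      exact absurd (hr.trans h) (not_le.mpr hlt)
    obtain ⟨C, hCsub, hCm, hC0, hCle⟩ := wcme_small μ hμ hBm.compl hc0
      (ε := r - μ Binf) (by simpa [tsub_eq_zero_iff_le] using not_le.mpr hlt)
    have hkey : ∀ n, μ (T n).1 + μ C / 2 ≤ μ (T (n+1)).1 := by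
      intro n
      refine hspec n C hCm (hCsub.trans (compl_subset_compl.mpr (subset_iUnion (fun n => (T n).1) n))) ?_
      calc μ (T n).1 + μ C ≤ μ Binf + (r - μ Binf) :=
            add_le_add (measure_mono (subset_iUnion (fun n => (T n).1) n)) hCle
        _ = r := add_tsub_cancel_of_le hlt.le
    have hgrow : ∀ n : ℕ, (n : ℝ≥0∞) * (μ C / 2) ≤ μ (T n).1 := by
      intro n; induction n with
      | zero => simp
      | succ n ih =>
        have : ((n : ℕ) + 1 : ℝ≥0∞) * (μ C / 2) = (n : ℝ≥0∞) * (μ C / 2) + μ C / 2 := by ring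
        rw [Nat.cast_succ, this]
        exact (add_le_add_left ih _).trans (hkey n)
    have hc2 : μ C / 2 ≠ 0 := by
      simp only [ne_eq, ENNReal.div_eq_zero_iff, not_or]
      exact ⟨hC0, by norm_num⟩
    have hc2top : μ C / 2 ≠ ⊤ := by
      refine (ENNReal.div_lt_top (measure_ne_top μ C) (by norm_num)).ne
    obtain ⟨n, hn⟩ := ENNReal.exists_nat_gt ((ENNReal.div_lt_top one_ne_top hc2).ne)
    have hub : (n : ℝ≥0∞) * (μ C / 2) ≤ 1 := (hgrow n).trans ((T n).2.2.trans hr)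
    have hlt1 : (1 : ℝ≥0∞) < (n : ℝ≥0∞) * (μ C / 2) := by
      rw [ENNReal.div_lt_iff (Or.inl hc2) (Or.inl hc2top)] at hn
      exact hn
    exact absurd hub (not_le.mpr hlt1)

noncomputable def wcmeF (p m v t : ℝ) (α : ℝ) : ℝ :=
  (1 - α) * (m - t) +
    v * ((ENNReal.ofReal (1 - α) ^ (1 - p) + ENNReal.ofReal α ^ (1 - p)) ^ (-1 / p)).toReal

lemma wcme_ne_top {p : ℝ} (hp : 1 < p) (α : ℝ) :
    (ENNReal.ofReal (1 - α) ^ (1 - p) + ENNReal.ofReal α ^ (1 - p)) ^ (-1 / p) ≠ ⊤ := by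
  intro h
  rw [ENNReal.rpow_eq_top_iff] at h
  rcases h with ⟨hsum, _⟩ | ⟨_, hpos⟩
  · rcases add_eq_zero.mp hsum with ⟨h1, _⟩
    rw [ENNReal.rpow_eq_zero_iff] at h1
    rcases h1 with ⟨_, h⟩ | ⟨htop, _⟩
    · linarith
    · exact ENNReal.ofReal_ne_top htop
  · have : (-1 : ℝ) / p < 0 := div_neg_of_neg_of_pos (by norm_num) (by linarith)
    linarith

lemma wcme_cont {p : ℝ} (hp : 1 < p) (m v t : ℝ) : Continuous (wcmeF p m v t) := by
  have hG : Continuous (fun α : ℝ =>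
      (ENNReal.ofReal (1 - α) ^ (1 - p) + ENNReal.ofReal α ^ (1 - p)) ^ (-1 / p)) := by
    apply ENNReal.continuous_rpow_const.comp
    exact ((ENNReal.continuous_rpow_const.comp
        (ENNReal.continuous_ofReal.comp (continuous_const.sub continuous_id))).add
      (ENNReal.continuous_rpow_const.comp ENNReal.continuous_ofReal))
  have hH : Continuous (fun α : ℝ =>
      ((ENNReal.ofReal (1 - α) ^ (1 - p) + ENNReal.ofReal α ^ (1 - p)) ^ (-1 / p)).toReal) := by
    rw [continuous_iff_continuousAt]
    intro x
    exact (ENNReal.tendsto_toReal (wcme_ne_top hp x)).comp hG.continuousAt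
  unfold wcmeF
  exact (((continuous_const.sub continuous_id).mul continuous_const).add
    (continuous_const.mul hH))

lemma wcme_toReal_interior {p α : ℝ} (hp : 1 < p) (h0 : 0 < α) (h1 : α < 1) :
    ((ENNReal.ofReal (1 - α) ^ (1 - p) + ENNReal.ofReal α ^ (1 - p)) ^ (-1 / p)).toReal
      = ((1 - α) ^ (1 - p) + α ^ (1 - p)) ^ (-1 / p) := by
  have h1α : 0 < 1 - α := by linarith
  rw [ENNReal.ofReal_rpow_of_pos h1α, ENNReal.ofReal_rpow_of_pos h0,
    ← ENNReal.ofReal_add (Real.rpow_nonneg h1α.le _) (Real.rpow_nonneg h0.le _),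
    ENNReal.ofReal_rpow_of_pos (by positivity),
    ENNReal.toReal_ofReal (Real.rpow_nonneg (by positivity) _)]

lemma wcme_F_zero {p : ℝ} (hp : 1 < p) (m v t : ℝ) : wcmeF p m v t 0 = m - t := by
  unfold wcmeF
  rw [ENNReal.ofReal_zero, ENNReal.zero_rpow_of_neg (by linarith), add_top,
    ENNReal.top_rpow_of_neg (div_neg_of_neg_of_pos (by norm_num) (by linarith))]
  simp

lemma wcme_F_one {p : ℝ} (hp : 1 < p) (m v t : ℝ) : wcmeF p m v t 1 = 0 := by
  unfold wcmeF
  rw [show (1 : ℝ) - 1 = 0 from by ring, ENNReal.ofReal_zero,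
    ENNReal.zero_rpow_of_neg (by linarith), top_add,
    ENNReal.top_rpow_of_neg (div_neg_of_neg_of_pos (by norm_num) (by linarith))]
  simp

lemma wcme_key {p q v w a b I : ℝ} (hp : 1 < p) (hq : q = p / (p - 1)) (hv : 0 ≤ v)
    (hw0 : 0 < w) (hw1 : w < 1) (ha : 0 ≤ a) (hb : 0 ≤ b) (hab : a + b ≤ v ^ p)
    (hI1 : I ≤ a ^ (1 / p) * w ^ (1 / q)) (hI2 : I ≤ b ^ (1 / p) * (1 - w) ^ (1 / q)) :
    I ≤ v * (w ^ (1 - p) + (1 - w) ^ (1 - p)) ^ (-1 / p) := by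
  have hp0 : (0 : ℝ) < p := by linarith
  have hw1' : (0 : ℝ) < 1 - w := by linarith
  have hS : 0 < w ^ (1 - p) + (1 - w) ^ (1 - p) := by positivity
  set S := w ^ (1 - p) + (1 - w) ^ (1 - p) with hSdef
  set s := v * S ^ (-1 / p) with hsdef
  have hs0 : 0 ≤ s := by positivity
  by_contra hcon
  push_neg at hcon
  have main : ∀ x c : ℝ, 0 < x → 0 ≤ c → I ≤ c ^ (1 / p) * x ^ (1 / q) →
      s ^ p * x ^ (1 - p) < c := by
    intro x c hx hc hIc
    have hxq : 0 < x ^ (1 / q) := Real.rpow_pos_of_pos hx _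
    have h1 : s / x ^ (1 / q) < c ^ (1 / p) := by
      rw [div_lt_iff₀ hxq]
      exact lt_of_lt_of_le hcon hIc
    have h2 : (s / x ^ (1 / q)) ^ p < (c ^ (1 / p)) ^ p :=
      Real.rpow_lt_rpow (by positivity) h1 hp0
    have h3 : (c ^ (1 / p)) ^ p = c := by
      rw [← Real.rpow_mul hc, one_div_mul_cancel hp0.ne', Real.rpow_one]
    have h4 : (s / x ^ (1 / q)) ^ p = s ^ p * x ^ (1 - p) := by
      rw [Real.div_rpow hs0 hxq.le, ← Real.rpow_mul hx.le]
      have hqe : 1 / q * p = p - 1 := by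
        rw [hq]; field_simp
      rw [hqe, div_eq_mul_inv, ← Real.rpow_neg hx.le]
      norm_num
    rw [h4, h3] at h2
    exact h2
  have hA := main w a hw0 ha hI1
  have hB := main (1 - w) b hw1' hb hI2
  have hsum : s ^ p * S < a + b := by
    rw [hSdef, mul_add]
    exact add_lt_add hA hB
  have hsp : s ^ p * S = v ^ p := by
    rw [hsdef, Real.mul_rpow hv (Real.rpow_nonneg hS.le _), ← Real.rpow_mul hS.le]
    have he : (-1 / p) * p = -1 := by field_simp
    rw [he, Real.rpow_neg_one, mul_assoc, inv_mul_cancel₀ hS.ne', mul_one]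
  linarith

lemma wcme_pw_integrable (μ : Measure Ω) [IsProbabilityMeasure μ] {A : Set Ω}
    (hA : MeasurableSet A) (c e : ℝ) :
    Integrable (fun ω => if ω ∈ A then c else e) μ := by
  have hfe : (fun ω => if ω ∈ A then c else e)
      = fun ω => A.indicator (fun _ => c - e) ω + e := by
    funext ω; by_cases h : ω ∈ A <;> simp [h]
  rw [hfe]
  exact ((integrable_const (c - e)).indicator hA).add (integrable_const e)

lemma wcme_pw_integral (μ : Measure Ω) [IsProbabilityMeasure μ] {A : Set Ω}
    (hA : MeasurableSet A) (c e : ℝ) :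
    ∫ ω, (if ω ∈ A then c else e) ∂μ = c * (μ A).toReal + e * (1 - (μ A).toReal) := by
  have hfe : (fun ω => if ω ∈ A then c else e)
      = fun ω => A.indicator (fun _ => c - e) ω + e := by
    funext ω; by_cases h : ω ∈ A <;> simp [h]
  rw [hfe, integral_add ((integrable_const (c - e)).indicator hA) (integrable_const e),
    integral_indicator_const _ hA, integral_const, probReal_univ]
  simp only [ENNReal.toReal_one, one_smul, smul_eq_mul, measureReal_def]
  ring

lemma wcme_lower (μ : Measure Ω) [IsProbabilityMeasure μ] (hμ : Atomless μ)
    {p m v t α : ℝ} (hp : 1 < p) (hv : 0 ≤ v) (h0 : 0 < α) (h1 : α < 1) :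
    ∃ y ∈ meanExcessMomentSet μ p m v t,
      (1 - α) * (m - t) + v * ((1 - α) ^ (1 - p) + α ^ (1 - p)) ^ (-1 / p) ≤ y := by
  have hp0 : (0 : ℝ) < p := by linarith
  have h1α : 0 < 1 - α := by linarith
  set K := (1 - α) * α ^ p + α * (1 - α) ^ p with hKdef
  have hKpos : 0 < K := by positivity
  set d := v / K ^ (1 / p) with hddef
  have hd0 : 0 ≤ d := by positivity
  set xp := m + α * d with hxp
  set xm := m - (1 - α) * d with hxm
  obtain ⟨A, hAm, hAμ⟩ := wcme_sier μ hμ (r := ENNReal.ofReal (1 - α))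
    (by rw [← ENNReal.ofReal_one]; exact ENNReal.ofReal_le_ofReal (by linarith))
  have hw : (μ A).toReal = 1 - α := by rw [hAμ, ENNReal.toReal_ofReal h1α.le]
  set X : Ω → ℝ := fun ω => if ω ∈ A then xp else xm with hX
  have hmeas : Measurable X := Measurable.ite hAm measurable_const measurable_const
  have hint : Integrable X μ := wcme_pw_integrable μ hAm xp xm
  have hmean : ∫ ω, X ω ∂μ = m := by
    rw [hX, wcme_pw_integral μ hAm xp xm, hw, hxp, hxm]
    ring
  have hmomf : (fun ω => |X ω - m| ^ p) = fun ω => if ω ∈ A then (α * d) ^ p else ((1 - α) * d) ^ p := by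
    funext ω
    by_cases h : ω ∈ A <;> simp only [hX, h, if_true, if_false, hxp, hxm]
    · rw [add_sub_cancel_left, abs_of_nonneg (by positivity)]
    · rw [sub_sub_cancel_left, abs_neg, abs_of_nonneg (by positivity)]
  have hmomint : Integrable (fun ω => |X ω - m| ^ p) μ := by
    rw [hmomf]; exact wcme_pw_integrable μ hAm _ _
  have hdp : d ^ p = v ^ p / K := by
    rw [hddef, Real.div_rpow hv (Real.rpow_nonneg hKpos.le _), ← Real.rpow_mul hKpos.le,
      one_div_mul_cancel hp0.ne', Real.rpow_one]
  have hmom : ∫ ω, |X ω - m| ^ p ∂μ ≤ v ^ p := by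
    rw [hmomf, wcme_pw_integral μ hAm _ _, hw]
    rw [Real.mul_rpow h0.le hd0, Real.mul_rpow h1α.le hd0, hdp]
    have : α ^ p * (v ^ p / K) * (1 - α) + (1 - α) ^ p * (v ^ p / K) * (1 - (1 - α))
        = (v ^ p / K) * K := by ring
    rw [this, div_mul_cancel₀ _ hKpos.ne']
  have hmaxf : (fun ω => max (X ω - t) 0)
      = fun ω => if ω ∈ A then max (xp - t) 0 else max (xm - t) 0 := by
    funext ω; by_cases h : ω ∈ A <;> simp [hX, h]
  have hyval : ∫ ω, max (X ω - t) 0 ∂μ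
      = max (xp - t) 0 * (1 - α) + max (xm - t) 0 * (1 - (1 - α)) := by
    rw [hmaxf, wcme_pw_integral μ hAm _ _, hw]
  refine ⟨∫ ω, max (X ω - t) 0 ∂μ, ⟨X, hmeas, hint, hmean, hmomint, hmom, rfl⟩, ?_⟩
  have hSpos : 0 < (1 - α) ^ (1 - p) + α ^ (1 - p) := by positivity
  have hid : (1 - α) * (m - t) + v * ((1 - α) ^ (1 - p) + α ^ (1 - p)) ^ (-1 / p)
      = (xp - t) * (1 - α) := by
    have hKS : K = ((1 - α) ^ (1 - p) + α ^ (1 - p)) * ((1 - α) * α) ^ p := by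
      rw [Real.mul_rpow h1α.le h0.le, add_mul, hKdef]
      rw [show (1 - α) ^ (1 - p) * ((1 - α) ^ p * α ^ p)
          = ((1 - α) ^ (1 - p) * (1 - α) ^ p) * α ^ p from by ring,
        show α ^ (1 - p) * ((1 - α) ^ p * α ^ p)
          = (α ^ (1 - p) * α ^ p) * (1 - α) ^ p from by ring,
        ← Real.rpow_add h1α, ← Real.rpow_add h0]
      norm_num
    have hK2 : K ^ (1 / p) = ((1 - α) ^ (1 - p) + α ^ (1 - p)) ^ (1 / p) * ((1 - α) * α) := by
      rw [hKS, Real.mul_rpow hSpos.le (by positivity), ← Real.rpow_mul (by positivity : (0:ℝ) ≤ (1 - α) * α),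
        mul_one_div_cancel hp0.ne', Real.rpow_one]
    have hxpt : xp - t = (m - t) + α * d := by rw [hxp]; ring
    rw [hxpt, hddef, hK2]
    have hq0 : (0:ℝ) < ((1 - α) ^ (1 - p) + α ^ (1 - p)) ^ (1 / p) := Real.rpow_pos_of_pos hSpos _
    rw [show (-1 : ℝ) / p = -(1 / p) from by ring, Real.rpow_neg hSpos.le]
    field_simp
  rw [hyval]
  refine le_trans (le_of_eq hid) ?_
  have h2 : 0 ≤ max (xm - t) 0 * (1 - (1 - α)) := by
    have hαα : (0:ℝ) ≤ 1 - (1 - α) := by linarith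
    exact mul_nonneg (le_max_right _ _) hαα
  have h3 : (xp - t) * (1 - α) ≤ max (xp - t) 0 * (1 - α) :=
    mul_le_mul_of_nonneg_right (le_max_left _ _) h1α.le
  linarith

lemma wcme_upper (μ : Measure Ω) [IsProbabilityMeasure μ] {p m v t : ℝ}
    (hp : 1 < p) (hv : 0 ≤ v) {y : ℝ} (hy : y ∈ meanExcessMomentSet μ p m v t) :
    ∃ α ∈ Icc (0:ℝ) 1, y ≤ wcmeF p m v t α := by
  obtain ⟨X, hXm, hXint, hXmean, hmomint, hmom, hyeq⟩ := hy
  have hp0 : (0:ℝ) < p := by linarith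
  set g : Ω → ℝ := fun ω => X ω - m with hgdef
  have hgint : Integrable g μ := hXint.sub (integrable_const m)
  have hgmean : ∫ ω, g ω ∂μ = 0 := by
    rw [hgdef]
    rw [integral_sub hXint (integrable_const m), hXmean, integral_const, probReal_univ]
    simp
  set A : Set Ω := {ω | t < X ω} with hAdef
  have hAm : MeasurableSet A := measurableSet_lt measurable_const hXm
  have hmax : (fun ω => max (X ω - t) 0) = A.indicator (fun ω => X ω - t) := by
    funext ω
    by_cases h : ω ∈ A
    · rw [indicator_of_mem h]
      exact max_eq_left (sub_nonneg.mpr (le_of_lt h))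
    · rw [indicator_of_notMem h]
      exact max_eq_right (sub_nonpos.mpr (not_lt.mp h))
  have hyA : y = ∫ ω in A, (X ω - t) ∂μ := by
    rw [hyeq, hmax, integral_indicator hAm]
  by_cases hA0 : μ A = 0
  · refine ⟨1, ⟨zero_le_one, le_refl 1⟩, ?_⟩
    rw [wcme_F_one hp, hyA, Measure.restrict_eq_zero.mpr hA0, integral_zero_measure]
  by_cases hA1 : μ A = 1
  · refine ⟨0, ⟨le_refl 0, zero_le_one⟩, ?_⟩
    rw [wcme_F_zero hp, hyA]
    have hcompl : μ Aᶜ = 0 := by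
      rw [measure_compl hAm (measure_ne_top μ A), measure_univ, hA1, tsub_self]
    have hsplit : ∫ ω in A, (X ω - t) ∂μ + ∫ ω in Aᶜ, (X ω - t) ∂μ = ∫ ω, (X ω - t) ∂μ :=
      integral_add_compl hAm (hXint.sub (integrable_const t))
    rw [Measure.restrict_eq_zero.mpr hcompl, integral_zero_measure, add_zero] at hsplit
    rw [hsplit, integral_sub hXint (integrable_const t), hXmean, integral_const, probReal_univ]
    simp
  -- interior case
  set w := (μ A).toReal with hwdef
  have hAne : μ A ≠ ⊤ := measure_ne_top μ A
  have hw0 : 0 < w := ENNReal.toReal_pos hA0 hAne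
  have hw1 : w < 1 := by
    have hlt : μ A < 1 := lt_of_le_of_ne prob_le_one hA1
    have := ENNReal.toReal_lt_toReal hAne one_ne_top |>.mpr hlt
    simpa using this
  set q := p / (p - 1) with hqdef
  have hpq : p.HolderConjugate q := Real.HolderConjugate.conjExponent hp
  have hmemg : MemLp g (ENNReal.ofReal p) μ := by
    have h01 : (ENNReal.ofReal p) ≠ 0 := by
      simp only [ne_eq, ENNReal.ofReal_eq_zero, not_le]; linarith
    have h02 : (ENNReal.ofReal p) ≠ ⊤ := ENNReal.ofReal_ne_top
    refine (memLp_norm_rpow_iff hgint.1 h01 h02).mp ?_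
    rw [ENNReal.div_self h01 h02]
    rw [memLp_one_iff_integrable]
    have : (fun x : Ω => ‖g x‖ ^ (ENNReal.ofReal p).toReal) = fun ω => |X ω - m| ^ p := by
      funext ω
      rw [ENNReal.toReal_ofReal hp0.le, Real.norm_eq_abs, hgdef]
    rw [this]
    exact hmomint
  have holder : ∀ s : Set Ω, MeasurableSet s →
      ∫ ω in s, |g ω| ∂μ ≤ (∫ ω in s, |g ω| ^ p ∂μ) ^ (1/p) * ((μ s).toReal) ^ (1/q) := by
    intro s hs
    have hres := integral_mul_le_Lp_mul_Lq_of_nonneg (μ := μ.restrict s) hpq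
      (f := fun ω => |g ω|) (g := fun _ => (1:ℝ))
      (Filter.Eventually.of_forall fun ω => abs_nonneg _)
      (Filter.Eventually.of_forall fun _ => zero_le_one)
      (by
        have := hmemg.norm.restrict (s := s)
        simpa [Real.norm_eq_abs] using this)
      (memLp_const 1)
    simp only [mul_one, Real.one_rpow] at hres
    rw [integral_const] at hres
    simp only [Measure.restrict_apply_univ, smul_eq_mul, mul_one, measureReal_restrict_apply_univ, measureReal_def] at hres
    exact hres
  set I := ∫ ω in A, g ω ∂μ with hIdef
  set a := ∫ ω in A, |g ω| ^ p ∂μ with hadef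
  set b := ∫ ω in Aᶜ, |g ω| ^ p ∂μ with hbdef
  have ha0 : 0 ≤ a := integral_nonneg fun ω => Real.rpow_nonneg (abs_nonneg _) _
  have hb0 : 0 ≤ b := integral_nonneg fun ω => Real.rpow_nonneg (abs_nonneg _) _
  have habs : (fun ω => |X ω - m| ^ p) = fun ω => |g ω| ^ p := by rfl
  have hab : a + b ≤ v ^ p := by
    rw [hadef, hbdef]
    rw [integral_add_compl hAm (habs ▸ hmomint)]
    exact le_trans (le_of_eq (by rw [← habs])) hmom
  have hI1 : I ≤ a ^ (1/p) * w ^ (1/q) := by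
    refine le_trans (le_trans (le_abs_self _) ?_) (holder A hAm)
    rw [← Real.norm_eq_abs]
    exact norm_integral_le_integral_norm _
  have hI2 : I ≤ b ^ (1/p) * (1 - w) ^ (1/q) := by
    have hcompl : (μ Aᶜ).toReal = 1 - w := by
      rw [measure_compl hAm hAne, measure_univ, hwdef,
        ENNReal.toReal_sub_of_le prob_le_one one_ne_top]
      simp
    have hsplit : I + ∫ ω in Aᶜ, g ω ∂μ = 0 := by
      rw [hIdef, integral_add_compl hAm hgint, hgmean]
    have hIe : I = - ∫ ω in Aᶜ, g ω ∂μ := by linarith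
    calc I = - ∫ ω in Aᶜ, g ω ∂μ := hIe
      _ ≤ |∫ ω in Aᶜ, g ω ∂μ| := neg_le_abs _
      _ ≤ ∫ ω in Aᶜ, |g ω| ∂μ := by
          rw [← Real.norm_eq_abs]
          exact norm_integral_le_integral_norm _
      _ ≤ b ^ (1/p) * ((μ Aᶜ).toReal) ^ (1/q) := holder Aᶜ hAm.compl
      _ = b ^ (1/p) * (1 - w) ^ (1/q) := by rw [hcompl]
  have hkey := wcme_key hp hqdef hv hw0 hw1 ha0 hb0 hab hI1 hI2
  refine ⟨1 - w, ⟨by linarith, by linarith⟩, ?_⟩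
  have hFval : wcmeF p m v t (1 - w) = w * (m - t) + v * (w ^ (1-p) + (1-w) ^ (1-p)) ^ (-1/p) := by
    unfold wcmeF
    rw [wcme_toReal_interior hp (by linarith) (by linarith)]
    rw [show (1 : ℝ) - (1 - w) = w from by ring]
  rw [hFval]
  have hyI : y = I + (m - t) * w := by
    rw [hyA]
    have : (fun ω => X ω - t) = fun ω => g ω + (m - t) := by
      funext ω; rw [hgdef]; ring
    rw [this, integral_add (hgint.restrict) (integrable_const _), integral_const]
    simp only [Measure.restrict_apply_univ, smul_eq_mul, measureReal_restrict_apply_univ, measureReal_def]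
    rw [hIdef, hwdef]; ring
  rw [hyI]
  linarith


end WCMEAux

/-- **Worst-case mean excess value under moment uncertainty.** For `p > 1`, `m, t ∈ ℝ` and
`v ≥ 0`, the supremum of `E[(X - t)_+]` over `L^p(m, v)` equals the maximum over `α ∈ [0,1]`
of `(1-α)(m-t) + v ((1-α)^{1-p} + α^{1-p})^{-1/p}`, where the inner expression is computed in
`[0, ∞]` so that the conventions `1/0 = ∞` and `1/∞ = 0` hold at the endpoints. -/
theorem worst_case_mean_excess_moment {Ω : Type*} [MeasurableSpace Ω] (μ : Measure Ω)
    [IsProbabilityMeasure μ] (hμ : Atomless μ)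
    (p m v t : ℝ) (hp : 1 < p) (hv : 0 ≤ v) :
    IsGreatest {y : ℝ | ∃ α ∈ Set.Icc (0 : ℝ) 1, y = (1 - α) * (m - t) +
        v * ((ENNReal.ofReal (1 - α) ^ (1 - p) + ENNReal.ofReal α ^ (1 - p)) ^ (-1 / p)).toReal}
      (sSup (meanExcessMomentSet μ p m v t)) := by
  have hSeq : {y : ℝ | ∃ α ∈ Set.Icc (0 : ℝ) 1, y = (1 - α) * (m - t) +
        v * ((ENNReal.ofReal (1 - α) ^ (1 - p) + ENNReal.ofReal α ^ (1 - p)) ^ (-1 / p)).toReal}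
      = wcmeF p m v t '' Icc 0 1 := by
    ext y
    simp only [mem_setOf_eq, mem_image, wcmeF]
    constructor
    · rintro ⟨α, hα, rfl⟩; exact ⟨α, hα, rfl⟩
    · rintro ⟨α, hα, rfl⟩; exact ⟨α, hα, rfl⟩
  rw [hSeq]
  have hcomp : IsCompact (wcmeF p m v t '' Icc 0 1) := isCompact_Icc.image (wcme_cont hp m v t)
  have hne : (wcmeF p m v t '' Icc 0 1).Nonempty :=
    ⟨_, mem_image_of_mem _ (left_mem_Icc.mpr zero_le_one)⟩
  have hbdd : BddAbove (wcmeF p m v t '' Icc 0 1) := hcomp.bddAbove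
  -- the constant variable m
  have hMmem : max (m - t) 0 ∈ meanExcessMomentSet μ p m v t := by
    refine ⟨fun _ => m, measurable_const, integrable_const m, ?_, ?_, ?_, ?_⟩
    · rw [integral_const, probReal_univ]; simp
    · have : (fun _ : Ω => |m - m| ^ p) = fun _ => (0:ℝ) := by
        funext ω; rw [sub_self, abs_zero, Real.zero_rpow (by linarith)]
      rw [this]; exact integrable_const 0
    · have : (fun _ : Ω => |m - m| ^ p) = fun _ => (0:ℝ) := by
        funext ω; rw [sub_self, abs_zero, Real.zero_rpow (by linarith)]
      rw [this, integral_const]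
      simp only [smul_eq_mul, mul_zero]
      exact Real.rpow_nonneg hv p
    · rw [integral_const, probReal_univ]; simp
  have hMne : (meanExcessMomentSet μ p m v t).Nonempty := ⟨_, hMmem⟩
  have hub : ∀ y ∈ meanExcessMomentSet μ p m v t, y ≤ sSup (wcmeF p m v t '' Icc 0 1) := by
    intro y hy
    obtain ⟨α, hα, hle⟩ := wcme_upper μ hp hv hy
    exact hle.trans (le_csSup hbdd (mem_image_of_mem _ hα))
  have hMbdd : BddAbove (meanExcessMomentSet μ p m v t) := ⟨_, hub⟩
  have h1 : sSup (meanExcessMomentSet μ p m v t) ≤ sSup (wcmeF p m v t '' Icc 0 1) :=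
    csSup_le hMne hub
  have h2 : sSup (wcmeF p m v t '' Icc 0 1) ≤ sSup (meanExcessMomentSet μ p m v t) := by
    refine csSup_le hne ?_
    rintro y ⟨α, hα, rfl⟩
    rcases eq_or_lt_of_le hα.1 with h0 | h0
    · rw [← h0, wcme_F_zero hp]
      refine le_trans ?_ (le_csSup hMbdd hMmem)
      exact le_max_left _ _
    rcases eq_or_lt_of_le hα.2 with h1' | h1'
    · rw [h1', wcme_F_one hp]
      refine le_trans ?_ (le_csSup hMbdd hMmem)
      exact le_max_right _ _
    · obtain ⟨y', hy'M, hy'⟩ := wcme_lower μ hμ (p := p) (m := m) (v := v) (t := t) hp hv h0 h1'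
      have hFα : wcmeF p m v t α
          = (1 - α) * (m - t) + v * ((1 - α) ^ (1 - p) + α ^ (1 - p)) ^ (-1 / p) := by
        unfold wcmeF
        rw [wcme_toReal_interior hp h0 h1']
      rw [hFα]
      exact le_trans hy' (le_csSup hMbdd hy'M)
  have hM : sSup (meanExcessMomentSet μ p m v t) = sSup (wcmeF p m v t '' Icc 0 1) :=
    le_antisymm h1 h2
  rw [hM]
  exact ⟨hcomp.sSup_mem hne, fun y hy => le_csSup hcomp.bddAbove hy⟩
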